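/- Let n ≥ 2 and m ≥ 0 be integers, let A ⊆ ℝᵐ be a bounded measurable set, let δ > 0, and let p be a real number with 0 ≤ p < n. Then ∫_{B_δⁿ × A} |∇u⋆(x′, x″)|^p d(x′, x″) = (n−1)^{p/2} · ω_{n−1} · λ_m(A) · δ^{n−p}/(n−p), where B_δⁿ is the open ball of radius δ centered at the origin in ℝⁿ and λ_m denotes Lebesgue measure on ℝᵐ. -/

import Mathlib

open MeasureTheory

/-- The Frobenius (Hilbert–Schmidt) norm of a continuous linear map from
`ℝⁿ × ℝᵐ` to `ℝⁿ`, computed via the standard orthonormal basis of the product. -/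
noncomputable def frobProd {n m : ℕ}
    (f : (EuclideanSpace ℝ (Fin n) × EuclideanSpace ℝ (Fin m)) →L[ℝ] EuclideanSpace ℝ (Fin n)) :
    ℝ :=
  Real.sqrt ((∑ i : Fin n, ‖f (EuclideanSpace.single i 1, 0)‖ ^ 2) +
    ∑ j : Fin m, ‖f (0, EuclideanSpace.single j 1)‖ ^ 2)

/-- **Lemma 5.1 (lem: flat vortex computation).** For the vortex map
`u⋆(x′,x″) = x′/‖x′‖`, a bounded measurable `A ⊆ ℝᵐ`, `δ > 0` and `0 ≤ p < n`:
`∫_{B_δⁿ × A} |∇u⋆|^p = (n−1)^(p/2) · ω_{n−1} · λ_m(A) · δ^(n−p)/(n−p)`,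
where `ω_{n−1} = n · λ_n(B₁ⁿ)` and `|∇u⋆|` is the Frobenius norm of the derivative. -/
lemma hasFDerivAt_norm' {n : ℕ} (y : EuclideanSpace ℝ (Fin n)) (hy : y ≠ 0) :
    HasFDerivAt (fun z : EuclideanSpace ℝ (Fin n) => ‖z‖) (‖y‖⁻¹ • innerSL ℝ y) y := by
  have hne : ‖y‖ ≠ 0 := norm_ne_zero_iff.2 hy
  have h1 := (hasStrictFDerivAt_norm_sq y).hasFDerivAt
  have h2 : HasDerivAt Real.sqrt (1 / (2 * Real.sqrt (‖y‖ ^ 2))) (‖y‖ ^ 2) :=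
    Real.hasDerivAt_sqrt (by positivity)
  have h3 := h2.comp_hasFDerivAt y h1
  have heq : (fun z : EuclideanSpace ℝ (Fin n) => ‖z‖) = Real.sqrt ∘ (fun z => ‖z‖ ^ 2) := by
    funext z; simp [Real.sqrt_sq (norm_nonneg z)]
  rw [heq]
  refine h3.congr_fderiv ?_
  ext v
  simp [Real.sqrt_sq (norm_nonneg y), two_smul]
  field_simp
  ring

lemma hasFDerivAt_normSmul {n : ℕ} (y : EuclideanSpace ℝ (Fin n)) (hy : y ≠ 0) :
    HasFDerivAt (fun z : EuclideanSpace ℝ (Fin n) => ‖z‖⁻¹ • z)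
      ((‖y‖⁻¹ • ContinuousLinearMap.id ℝ _) +
        ((-(‖y‖ ^ 2)⁻¹ • (‖y‖⁻¹ • innerSL ℝ y)).smulRight y)) y := by
  have hne : ‖y‖ ≠ 0 := norm_ne_zero_iff.2 hy
  have hinv : HasFDerivAt (fun z : EuclideanSpace ℝ (Fin n) => ‖z‖⁻¹)
      (-(‖y‖ ^ 2)⁻¹ • (‖y‖⁻¹ • innerSL ℝ y)) y := by
    have := (hasDerivAt_inv hne).comp_hasFDerivAt y (hasFDerivAt_norm' y hy)
    exact this
  exact hinv.smul (hasFDerivAt_id y)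

lemma frob_eval {n m : ℕ} (hn : 2 ≤ n)
    (x : EuclideanSpace ℝ (Fin n) × EuclideanSpace ℝ (Fin m)) (hx : x.1 ≠ 0) :
    frobProd (fderiv ℝ
        (fun q : EuclideanSpace ℝ (Fin n) × EuclideanSpace ℝ (Fin m) => ‖q.1‖⁻¹ • q.1) x)
      = Real.sqrt ((n : ℝ) - 1) * ‖x.1‖⁻¹ := by
  set y := x.1 with hy
  have hne : ‖y‖ ≠ 0 := norm_ne_zero_iff.2 hx
  set D := ((‖y‖⁻¹ • ContinuousLinearMap.id ℝ (EuclideanSpace ℝ (Fin n))) +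
        ((-(‖y‖ ^ 2)⁻¹ • (‖y‖⁻¹ • innerSL ℝ y)).smulRight y)) with hD
  have hder : HasFDerivAt
      (fun q : EuclideanSpace ℝ (Fin n) × EuclideanSpace ℝ (Fin m) => ‖q.1‖⁻¹ • q.1)
      (D.comp (ContinuousLinearMap.fst ℝ _ _)) x :=
    (hasFDerivAt_normSmul y hx).comp (f := Prod.fst) x (hasFDerivAt_fst)
  rw [hder.fderiv]
  have happ : ∀ i : Fin n,
      ‖(D.comp (ContinuousLinearMap.fst ℝ (EuclideanSpace ℝ (Fin n)) (EuclideanSpace ℝ (Fin m))))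
        (EuclideanSpace.single i 1, 0)‖ ^ 2
      = ‖y‖⁻¹ ^ 2 - (y i) ^ 2 / ‖y‖ ^ 4 := by
    intro i
    have : (D.comp (ContinuousLinearMap.fst ℝ (EuclideanSpace ℝ (Fin n))
        (EuclideanSpace ℝ (Fin m)))) (EuclideanSpace.single i 1, 0)
        = ‖y‖⁻¹ • (EuclideanSpace.single i (1:ℝ))
          + (-(‖y‖ ^ 2)⁻¹ * (‖y‖⁻¹ * (y i))) • y := by
      simp [hD, ContinuousLinearMap.smul_apply, EuclideanSpace.inner_single_right]
    rw [this, @norm_add_sq_real]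
    have h1 : ‖‖y‖⁻¹ • EuclideanSpace.single i (1:ℝ)‖ ^ 2 = ‖y‖⁻¹ ^ 2 := by
      simp [norm_smul, mul_pow, abs_of_nonneg (inv_nonneg.2 (norm_nonneg y))]
    have h2 : inner ℝ (‖y‖⁻¹ • EuclideanSpace.single i (1:ℝ))
        ((-(‖y‖ ^ 2)⁻¹ * (‖y‖⁻¹ * (y i))) • y) = -(y i)^2 / ‖y‖ ^ 4 := by
      rw [real_inner_smul_left, real_inner_smul_right, EuclideanSpace.inner_single_left]
      field_simp
      simp
    have h3 : ‖(-(‖y‖ ^ 2)⁻¹ * (‖y‖⁻¹ * (y i))) • y‖ ^ 2 = (y i)^2 / ‖y‖ ^ 4 := by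
      rw [norm_smul, mul_pow, Real.norm_eq_abs, sq_abs]
      field_simp
    rw [h1, h2, h3]
    ring
  have happ2 : ∀ j : Fin m,
      ‖(D.comp (ContinuousLinearMap.fst ℝ (EuclideanSpace ℝ (Fin n)) (EuclideanSpace ℝ (Fin m))))
        (0, EuclideanSpace.single j 1)‖ ^ 2 = 0 := by
    intro j
    simp
  have hsum : ∑ i : Fin n, (y i) ^ 2 = ‖y‖ ^ 2 := by
    rw [EuclideanSpace.norm_eq, Real.sq_sqrt (by positivity)]
    simp [sq_abs]
  have h4 : ((n : ℝ) - 1) * ‖y‖⁻¹ ^ 2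
      = (∑ i : Fin n, ‖(D.comp (ContinuousLinearMap.fst ℝ (EuclideanSpace ℝ (Fin n))
          (EuclideanSpace ℝ (Fin m)))) (EuclideanSpace.single i 1, 0)‖ ^ 2)
        + ∑ j : Fin m, ‖(D.comp (ContinuousLinearMap.fst ℝ (EuclideanSpace ℝ (Fin n))
          (EuclideanSpace ℝ (Fin m)))) (0, EuclideanSpace.single j 1)‖ ^ 2 := by
    rw [Finset.sum_congr rfl fun i _ => happ i, Finset.sum_congr rfl fun j _ => happ2 j]
    rw [Finset.sum_sub_distrib, Finset.sum_const, Finset.sum_const]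
    rw [← Finset.sum_div, hsum]
    simp only [Finset.card_univ, Fintype.card_fin, nsmul_eq_mul, smul_eq_mul, mul_zero, add_zero]
    field_simp
  have hn1 : (0:ℝ) ≤ (n:ℝ) - 1 := by
    have : (2:ℝ) ≤ n := by exact_mod_cast hn
    linarith
  rw [frobProd, ← h4, Real.sqrt_mul hn1]
  rw [Real.sqrt_sq (inv_nonneg.2 (norm_nonneg y))]

lemma radial_int {n : ℕ} (hn : 2 ≤ n) {δ : ℝ} (hδ : 0 < δ) {p : ℝ} (hp0 : 0 ≤ p)
    (hpn : p < n) :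
    ∫ y in Metric.ball (0 : EuclideanSpace ℝ (Fin n)) δ, (‖y‖ ^ p)⁻¹
      = (n : ℝ) * (volume (Metric.ball (0 : EuclideanSpace ℝ (Fin n)) 1)).toReal *
        (δ ^ ((n : ℝ) - p) / ((n : ℝ) - p)) := by
  haveI : Nonempty (Fin n) := ⟨⟨0, by omega⟩⟩
  haveI : Nontrivial (EuclideanSpace ℝ (Fin n)) := by
    refine ⟨EuclideanSpace.single ⟨0, by omega⟩ (1:ℝ), 0, ?_⟩
    intro h
    have := congrArg (fun z : EuclideanSpace ℝ (Fin n) => z ⟨0, by omega⟩) h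
    simp at this
  set f : ℝ → ℝ := (Set.Iio δ).indicator (fun t => (t ^ p)⁻¹) with hf
  have h0 : ∫ y in Metric.ball (0 : EuclideanSpace ℝ (Fin n)) δ, (‖y‖ ^ p)⁻¹
      = ∫ y : EuclideanSpace ℝ (Fin n), f ‖y‖ := by
    rw [← integral_indicator measurableSet_ball]
    congr 1
    funext y
    by_cases hy : y ∈ Metric.ball (0 : EuclideanSpace ℝ (Fin n)) δ
    · rw [Set.indicator_of_mem hy, hf,
        Set.indicator_of_mem (show ‖y‖ ∈ Set.Iio δ from mem_ball_zero_iff.1 hy)]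
    · rw [Set.indicator_of_notMem hy, hf, Set.indicator_of_notMem]
      intro hc
      exact hy (mem_ball_zero_iff.2 hc)
  rw [h0, integral_fun_norm_addHaar volume f]
  have hdim : Module.finrank ℝ (EuclideanSpace ℝ (Fin n)) = n := finrank_euclideanSpace_fin
  rw [hdim]
  have h1 : ∫ y in Set.Ioi (0:ℝ), y ^ (n - 1) • f y = δ ^ ((n:ℝ) - p) / ((n:ℝ) - p) := by
    have hind : ∀ y : ℝ, y ^ (n - 1) • f y
        = (Set.Iio δ).indicator (fun t => t ^ (n - 1) * (t ^ p)⁻¹) y := by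
      intro y
      by_cases hy : y ∈ Set.Iio δ
      · rw [hf]; simp [Set.indicator_of_mem hy]
      · rw [hf]; simp [Set.indicator_of_notMem hy]
    simp_rw [hind]
    rw [setIntegral_indicator measurableSet_Iio]
    rw [show Set.Ioi (0:ℝ) ∩ Set.Iio δ = Set.Ioo 0 δ from Set.Ioi_inter_Iio]
    rw [setIntegral_congr_fun measurableSet_Ioo
      (g := fun y : ℝ => y ^ ((n:ℝ) - 1 - p)) ?_]
    · rw [← integral_Ioc_eq_integral_Ioo, ← intervalIntegral.integral_of_le hδ.le]
      rw [integral_rpow (Or.inl (by push_cast; linarith))]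
      rw [Real.zero_rpow (by push_cast; intro h; linarith [h] : (n:ℝ) - 1 - p + 1 ≠ 0)]
      rw [show (n:ℝ) - 1 - p + 1 = (n:ℝ) - p by ring]
      ring
    · intro y hy
      show y ^ (n - 1) * (y ^ p)⁻¹ = y ^ ((n:ℝ) - 1 - p)
      rw [← Real.rpow_natCast y (n - 1), ← Real.rpow_neg hy.1.le, ← Real.rpow_add hy.1]
      · congr 1
        push_cast [Nat.cast_sub (by omega : 1 ≤ n)]
        ring
  rw [h1]
  rw [nsmul_eq_mul, smul_eq_mul]
  simp only [Measure.real]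
  ring

theorem stmt_4 (n m : ℕ) (hn : 2 ≤ n) (A : Set (EuclideanSpace ℝ (Fin m)))
    (hAmeas : MeasurableSet A) (hAbdd : Bornology.IsBounded A)
    (δ : ℝ) (hδ : 0 < δ) (p : ℝ) (hp0 : 0 ≤ p) (hpn : p < n) :
    ∫ x in (Metric.ball (0 : EuclideanSpace ℝ (Fin n)) δ) ×ˢ A,
        (frobProd (fderiv ℝ
          (fun q : EuclideanSpace ℝ (Fin n) × EuclideanSpace ℝ (Fin m) => ‖q.1‖⁻¹ • q.1) x)) ^ p
      = ((n : ℝ) - 1) ^ (p / 2) *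
          ((n : ℝ) * (volume (Metric.ball (0 : EuclideanSpace ℝ (Fin n)) 1)).toReal) *
          (volume A).toReal * δ ^ ((n : ℝ) - p) / ((n : ℝ) - p) := by
  have hpn' : p < (n : ℝ) := by exact_mod_cast hpn
  haveI : Nonempty (Fin n) := ⟨⟨0, by omega⟩⟩
  haveI : Nontrivial (EuclideanSpace ℝ (Fin n)) := by
    refine ⟨EuclideanSpace.single ⟨0, by omega⟩ (1:ℝ), 0, ?_⟩
    intro h
    have := congrArg (fun z : EuclideanSpace ℝ (Fin n) => z ⟨0, by omega⟩) h
    simp at this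
  have hn1 : (0:ℝ) ≤ (n:ℝ) - 1 := by
    have : (2:ℝ) ≤ n := by exact_mod_cast hn
    linarith
  have hae : ∀ᵐ x : EuclideanSpace ℝ (Fin n) × EuclideanSpace ℝ (Fin m) ∂volume,
      x.1 ≠ 0 := by
    rw [ae_iff]
    have hset : {x : EuclideanSpace ℝ (Fin n) × EuclideanSpace ℝ (Fin m) | ¬ x.1 ≠ 0}
        = ({0} : Set (EuclideanSpace ℝ (Fin n))) ×ˢ
          (Set.univ : Set (EuclideanSpace ℝ (Fin m))) := by
      ext x
      simp only [Set.mem_setOf_eq, not_not, Set.mem_prod, Set.mem_singleton_iff,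
        Set.mem_univ, and_true]
    rw [hset, Measure.volume_eq_prod, Measure.prod_prod, measure_singleton, zero_mul]
  have hcongr : ∫ x in (Metric.ball (0 : EuclideanSpace ℝ (Fin n)) δ) ×ˢ A,
        (frobProd (fderiv ℝ
          (fun q : EuclideanSpace ℝ (Fin n) × EuclideanSpace ℝ (Fin m) => ‖q.1‖⁻¹ • q.1) x)) ^ p
      = ∫ x in (Metric.ball (0 : EuclideanSpace ℝ (Fin n)) δ) ×ˢ A,
          ((n : ℝ) - 1) ^ (p / 2) * ((‖x.1‖ ^ p)⁻¹ * 1) := by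
    refine setIntegral_congr_ae (measurableSet_ball.prod hAmeas) ?_
    filter_upwards [hae] with x hx _
    rw [frob_eval hn x hx]
    rw [Real.mul_rpow (Real.sqrt_nonneg _) (inv_nonneg.2 (norm_nonneg _))]
    rw [Real.inv_rpow (norm_nonneg _), mul_one]
    congr 1
    rw [Real.sqrt_eq_rpow, ← Real.rpow_mul hn1]
    congr 1
    ring
  rw [hcongr, Measure.volume_eq_prod, MeasureTheory.integral_const_mul,
    setIntegral_prod_mul (fun y : EuclideanSpace ℝ (Fin n) => (‖y‖ ^ p)⁻¹)
      (fun _ : EuclideanSpace ℝ (Fin m) => (1:ℝ))]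
  rw [setIntegral_const, radial_int hn hδ hp0 hpn', smul_eq_mul, mul_one]
  simp only [Measure.real]
  ring
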